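/- If f is an exact CN function on S with CN form [g : g₁,…,g_r], then -f is an exact CN function on S, with exact CN form obtainable as [2t - g : g₁,…,g_r, g - t] for a new variable t, i.e., there exist convex functions realizing -f as an exact CN function. -/

import Mathlib

/-- `f : ℝⁿ → ℝ` is an exact convertible nonconvex (CN) function: there are an
auxiliary dimension `m`, convex objective `g` and convex constraints `gᵢ` such
that every `x` has a feasible `y`, and on the whole feasible set `f x = g x y`. -/
def IsExactCN (n : ℕ) (f : (Fin n → ℝ) → ℝ) : Prop :=
  ∃ (m r : ℕ) (g : (Fin n → ℝ) → (Fin m → ℝ) → ℝ)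
    (gi : Fin r → (Fin n → ℝ) → (Fin m → ℝ) → ℝ),
    ConvexOn ℝ Set.univ (fun p : (Fin n → ℝ) × (Fin m → ℝ) => g p.1 p.2) ∧
    (∀ i, ConvexOn ℝ Set.univ (fun p : (Fin n → ℝ) × (Fin m → ℝ) => gi i p.1 p.2)) ∧
    (∀ x, ∃ y, ∀ i, gi i x y = 0) ∧
    (∀ x y, (∀ i, gi i x y = 0) → f x = g x y)

/-- If `f` is an exact CN function, so is `-f`. -/
theorem neg_exact_CN (n : ℕ) (f : (Fin n → ℝ) → ℝ) (hf : IsExactCN n f) :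
    IsExactCN n (fun x => -f x) := by
  obtain ⟨m, r, g, gi, hg, hgi, hfeas, hval⟩ := hf
  -- linear map extracting the last coordinate of the second component
  set T : ((Fin n → ℝ) × (Fin (m+1) → ℝ)) →ₗ[ℝ] ℝ :=
    (LinearMap.proj (Fin.last m)).comp (LinearMap.snd ℝ _ _) with hT
  -- linear map dropping the last coordinate
  set A : ((Fin n → ℝ) × (Fin (m+1) → ℝ)) →ₗ[ℝ] ((Fin n → ℝ) × (Fin m → ℝ)) :=
    (LinearMap.fst ℝ (Fin n → ℝ) (Fin (m+1) → ℝ)).prod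
      ((LinearMap.funLeft ℝ ℝ Fin.castSucc).comp (LinearMap.snd ℝ _ _)) with hA
  refine ⟨m + 1, r + 1,
    (fun x y => -(y (Fin.last m))),
    (fun i x y => if h : (i : ℕ) < r then gi ⟨i, h⟩ x (fun j => y j.castSucc)
      else g x (fun j => y j.castSucc) - y (Fin.last m)),
    ?_, ?_, ?_, ?_⟩
  · exact (-T).convexOn convex_univ
  · intro i
    by_cases h : (i : ℕ) < r
    · simp only [h, dif_pos]
      exact ((hgi ⟨i, h⟩).comp_linearMap A)
    · simp only [h, dif_neg]
      have h1 : ConvexOn ℝ Set.univ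
          (fun p : (Fin n → ℝ) × (Fin (m+1) → ℝ) => g p.1 (fun j => p.2 j.castSucc)) :=
        hg.comp_linearMap A
      have h2 : ConvexOn ℝ Set.univ
          (fun p : (Fin n → ℝ) × (Fin (m+1) → ℝ) => -(p.2 (Fin.last m))) :=
        (-T).convexOn convex_univ
      simpa [sub_eq_add_neg, Pi.add_def] using h1.add h2
  · intro x
    obtain ⟨y, hy⟩ := hfeas x
    refine ⟨Fin.snoc y (g x y), fun i => ?_⟩
    by_cases h : (i : ℕ) < r
    · simp [h, Fin.snoc_castSucc, hy]
    · simp [h, Fin.snoc_castSucc, Fin.snoc_last]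
  · intro x y hy
    have hlast := hy (Fin.last r)
    have hr : ¬ ((Fin.last r : Fin (r+1)) : ℕ) < r := by simp
    simp only [dif_neg hr] at hlast
    have hyc : ∀ i : Fin r, gi i x (fun j => y j.castSucc) = 0 := by
      intro i
      have := hy i.castSucc
      have hi : ((i.castSucc : Fin (r+1)) : ℕ) < r := i.isLt
      simp only [dif_pos hi] at this
      simpa using this
    have := hval x (fun j => y j.castSucc) hyc
    have : y (Fin.last m) = f x := by linarith [sub_eq_zero.mp hlast]
    simp only []
    rw [this]
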